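/- Let Q^π and Q^{π'} be the Q-functions of two policies π, π' on a finite MDP with discount γ ∈ (0,1), and suppose Q^π(s,·) is L-Lipschitz in a for every s (with A a finite metric space). Let ρ̂ be any distribution on states, and let ρ^{π'}_{ρ̂} be the normalized occupancy measure generated by (ρ̂, π', T). Then E_{s∼ρ̂, a∼π'(·|s)} |Q^{π'}(s,a) − Q^π(s,a)| ≤ (L/(1−γ)) E_{s ∼ ρ^{π'}_{ρ̂}} W₁(π'(·|s), π(·|s)). -/

import Mathlib

open Finset

/-- Difference of the true Q-functions of two policies, in expectation over an
initial distribution and the second policy, is bounded by `L/(1-γ)` times the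
expected Wasserstein distance between the policies under the occupancy measure. -/
theorem q_function_policy_mismatch {S A : Type*} [Fintype S] [Fintype A]
    [MetricSpace A] [Nonempty A]
    (γ : ℝ) (hγ0 : 0 < γ) (hγ1 : γ < 1)
    (T : S → A → S → ℝ) (hT : ∀ s a s', 0 ≤ T s a s') (hT1 : ∀ s a, ∑ s', T s a s' = 1)
    (r : S → A → ℝ)
    (π π' : S → A → ℝ) (hπ : ∀ s a, 0 ≤ π s a) (hπ1 : ∀ s, ∑ a, π s a = 1)
    (hπ' : ∀ s a, 0 ≤ π' s a) (hπ'1 : ∀ s, ∑ a, π' s a = 1)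
    (Qπ Qπ' : S → A → ℝ)
    (hQπ : ∀ s a, Qπ s a = r s a + γ * ∑ s', T s a s' * ∑ a', π s' a' * Qπ s' a')
    (hQπ' : ∀ s a, Qπ' s a = r s a + γ * ∑ s', T s a s' * ∑ a', π' s' a' * Qπ' s' a')
    (L : ℝ) (hL : 0 ≤ L) (hLip : ∀ s a a', |Qπ s a - Qπ s a'| ≤ L * dist a a')
    (ρhat : S → ℝ) (hρhat : ∀ s, 0 ≤ ρhat s) (hρhat1 : ∑ s, ρhat s = 1)
    (ρ : ℕ → S → ℝ) (hρ0 : ∀ s, ρ 0 s = ρhat s)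
    (hρrec : ∀ i s, ρ (i+1) s = ∑ s', ∑ a', T s' a' s * π' s' a' * ρ i s')
    (W1 : S → ℝ)
    (hW1 : ∀ s, W1 s = sSup {x | ∃ f : A → ℝ, (∀ a a', |f a - f a'| ≤ dist a a') ∧
        x = |(∑ a, f a * π' s a) - ∑ a, f a * π s a|}) :
    ∑ s, ρhat s * ∑ a, π' s a * |Qπ' s a - Qπ s a| ≤
      (L / (1-γ)) * ∑ s, ((1-γ) * ∑' i : ℕ, γ^i * ρ i s) * W1 s := by
  classical
  rcases isEmpty_or_nonempty S with hS | hS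
  · simp
  set D : S → ℝ := fun s => ∑ a, π' s a * |Qπ' s a - Qπ s a| with hDdef
  have hDnn : ∀ s, 0 ≤ D s := fun s =>
    Finset.sum_nonneg fun a _ => mul_nonneg (hπ' s a) (abs_nonneg _)
  -- basic facts about ρ
  have hρnn : ∀ i s, 0 ≤ ρ i s := by
    intro i
    induction i with
    | zero => intro s; rw [hρ0]; exact hρhat s
    | succ n ih =>
      intro s
      rw [hρrec]
      exact Finset.sum_nonneg fun s' _ => Finset.sum_nonneg fun a' _ =>
        mul_nonneg (mul_nonneg (hT _ _ _) (hπ' _ _)) (ih s')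
  have hρsum : ∀ i, ∑ s, ρ i s = 1 := by
    intro i
    induction i with
    | zero => simp [hρ0, hρhat1]
    | succ n ih =>
      have h1 : ∑ s, ρ (n+1) s = ∑ s', ∑ a', (∑ s, T s' a' s) * π' s' a' * ρ n s' := by
        simp only [hρrec]
        rw [Finset.sum_comm]
        refine Finset.sum_congr rfl fun s' _ => ?_
        rw [Finset.sum_comm]
        refine Finset.sum_congr rfl fun a' _ => ?_
        rw [Finset.sum_mul, Finset.sum_mul]
      rw [h1]
      calc ∑ s', ∑ a', (∑ s, T s' a' s) * π' s' a' * ρ n s'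
          = ∑ s', (∑ a', π' s' a') * ρ n s' := by
            refine Finset.sum_congr rfl fun s' _ => ?_
            rw [Finset.sum_mul]
            exact Finset.sum_congr rfl fun a' _ => by rw [hT1]; ring
        _ = ∑ s', ρ n s' :=
            Finset.sum_congr rfl fun s' _ => by rw [hπ'1]; ring
        _ = 1 := ih
  have hρle1 : ∀ i s, ρ i s ≤ 1 := by
    intro i s
    calc ρ i s ≤ ∑ s', ρ i s' :=
          Finset.single_le_sum (fun s' _ => hρnn i s') (Finset.mem_univ s)
      _ = 1 := hρsum i
  -- W1 : bddAbove and nonneg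
  obtain ⟨a0⟩ := ‹Nonempty A›
  have hple : ∀ (p : A → ℝ), (∀ a, 0 ≤ p a) → (∑ a, p a = 1) → ∀ a, p a ≤ 1 := by
    intro p hp hp1 a
    calc p a ≤ ∑ a', p a' := Finset.single_le_sum (fun a' _ => hp a') (Finset.mem_univ a)
      _ = 1 := hp1
  have key : ∀ (f : A → ℝ), (∀ a a', |f a - f a'| ≤ dist a a') →
      ∀ (p : A → ℝ), (∀ a, 0 ≤ p a) → (∑ a, p a = 1) →
      |(∑ a, f a * p a) - f a0| ≤ ∑ a, dist a a0 := by
    intro f hf p hp hp1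
    have h1 : (∑ a, f a * p a) - f a0 = ∑ a, (f a - f a0) * p a := by
      have h2 : ∑ a, (f a - f a0) * p a = (∑ a, f a * p a) - ∑ a, f a0 * p a := by
        rw [← Finset.sum_sub_distrib]
        exact Finset.sum_congr rfl fun a _ => by ring
      rw [h2, ← Finset.mul_sum, hp1, mul_one]
    rw [h1]
    calc |∑ a, (f a - f a0) * p a| ≤ ∑ a, |(f a - f a0) * p a| :=
          Finset.abs_sum_le_sum_abs _ _
      _ ≤ ∑ a, dist a a0 := by
          refine Finset.sum_le_sum fun a _ => ?_
          rw [abs_mul, abs_of_nonneg (hp a)]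
          calc |f a - f a0| * p a ≤ dist a a0 * 1 :=
                mul_le_mul (hf a a0) (hple p hp hp1 a) (hp a) dist_nonneg
            _ = dist a a0 := mul_one _
  have hbdd : ∀ s, BddAbove {x | ∃ f : A → ℝ, (∀ a a', |f a - f a'| ≤ dist a a') ∧
      x = |(∑ a, f a * π' s a) - ∑ a, f a * π s a|} := by
    intro s
    refine ⟨2 * ∑ a, dist a a0, ?_⟩
    rintro x ⟨f, hf, rfl⟩
    calc |(∑ a, f a * π' s a) - ∑ a, f a * π s a|
        ≤ |(∑ a, f a * π' s a) - f a0| + |f a0 - ∑ a, f a * π s a| := abs_sub_le _ _ _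
      _ ≤ (∑ a, dist a a0) + (∑ a, dist a a0) := by
          refine add_le_add (key f hf _ (hπ' s) (hπ'1 s)) ?_
          rw [abs_sub_comm]
          exact key f hf _ (hπ s) (hπ1 s)
      _ = 2 * ∑ a, dist a a0 := by ring
  have hW1nn : ∀ s, 0 ≤ W1 s := by
    intro s
    rw [hW1]
    refine le_csSup (hbdd s) ?_
    exact ⟨fun _ => 0, fun a a' => by simpa using dist_nonneg, by simp⟩
  -- Lipschitz bound against W1
  have hLipW : ∀ s, |(∑ a, Qπ s a * π' s a) - ∑ a, Qπ s a * π s a| ≤ L * W1 s := by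
    intro s
    rcases eq_or_lt_of_le hL with hL0 | hLpos
    · have hconst : ∀ a, Qπ s a = Qπ s a0 := by
        intro a
        have h := hLip s a a0
        rw [← hL0, zero_mul] at h
        have h2 : Qπ s a - Qπ s a0 = 0 := abs_nonpos_iff.mp h
        linarith
      have h1 : ∑ a, Qπ s a * π' s a = Qπ s a0 := by
        rw [show ∑ a, Qπ s a * π' s a = ∑ a, Qπ s a0 * π' s a from
          Finset.sum_congr rfl fun a _ => by rw [hconst a], ← Finset.mul_sum, hπ'1, mul_one]
      have h2 : ∑ a, Qπ s a * π s a = Qπ s a0 := by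
        rw [show ∑ a, Qπ s a * π s a = ∑ a, Qπ s a0 * π s a from
          Finset.sum_congr rfl fun a _ => by rw [hconst a], ← Finset.mul_sum, hπ1, mul_one]
      rw [h1, h2, sub_self, abs_zero, ← hL0, zero_mul]
    · set f : A → ℝ := fun a => Qπ s a / L with hfdef
      have hf : ∀ a a', |f a - f a'| ≤ dist a a' := by
        intro a a'
        rw [hfdef]
        simp only [div_sub_div_same, abs_div, abs_of_pos hLpos]
        rw [div_le_iff₀ hLpos]
        calc |Qπ s a - Qπ s a'| ≤ L * dist a a' := hLip s a a'
          _ = dist a a' * L := mul_comm _ _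
      have hmem : |(∑ a, f a * π' s a) - ∑ a, f a * π s a| ∈
          {x | ∃ g : A → ℝ, (∀ a a', |g a - g a'| ≤ dist a a') ∧
            x = |(∑ a, g a * π' s a) - ∑ a, g a * π s a|} := ⟨f, hf, rfl⟩
      have hle := le_csSup (hbdd s) hmem
      rw [← hW1 s] at hle
      have heq : |(∑ a, f a * π' s a) - ∑ a, f a * π s a|
          = |(∑ a, Qπ s a * π' s a) - ∑ a, Qπ s a * π s a| / L := by
        rw [hfdef]
        simp only [div_mul_eq_mul_div, ← Finset.sum_div, div_sub_div_same, abs_div,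
          abs_of_pos hLpos]
      rw [heq, div_le_iff₀ hLpos] at hle
      calc |(∑ a, Qπ s a * π' s a) - ∑ a, Qπ s a * π s a| ≤ W1 s * L := hle
        _ = L * W1 s := mul_comm _ _
  -- one-step difference bound
  have hdiff : ∀ s', |(∑ a', π' s' a' * Qπ' s' a') - ∑ a', π s' a' * Qπ s' a'|
      ≤ D s' + L * W1 s' := by
    intro s'
    have h1 : (∑ a', π' s' a' * Qπ' s' a') - ∑ a', π s' a' * Qπ s' a'
        = (∑ a', π' s' a' * (Qπ' s' a' - Qπ s' a'))
          + ((∑ a, Qπ s' a * π' s' a) - ∑ a, Qπ s' a * π s' a) := by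
      have e1 : ∑ a', π' s' a' * (Qπ' s' a' - Qπ s' a')
          = (∑ a', π' s' a' * Qπ' s' a') - ∑ a', π' s' a' * Qπ s' a' := by
        rw [← Finset.sum_sub_distrib]
        exact Finset.sum_congr rfl fun a _ => by ring
      have e2 : ∑ a, Qπ s' a * π' s' a = ∑ a', π' s' a' * Qπ s' a' :=
        Finset.sum_congr rfl fun a _ => mul_comm _ _
      have e3 : ∑ a, Qπ s' a * π s' a = ∑ a', π s' a' * Qπ s' a' :=
        Finset.sum_congr rfl fun a _ => mul_comm _ _
      rw [e1, e2, e3]; ring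
    rw [h1]
    calc |(∑ a', π' s' a' * (Qπ' s' a' - Qπ s' a'))
          + ((∑ a, Qπ s' a * π' s' a) - ∑ a, Qπ s' a * π s' a)|
        ≤ |∑ a', π' s' a' * (Qπ' s' a' - Qπ s' a')|
          + |(∑ a, Qπ s' a * π' s' a) - ∑ a, Qπ s' a * π s' a| := abs_add_le _ _
      _ ≤ D s' + L * W1 s' := by
          refine add_le_add ?_ (hLipW s')
          calc |∑ a', π' s' a' * (Qπ' s' a' - Qπ s' a')|
              ≤ ∑ a', |π' s' a' * (Qπ' s' a' - Qπ s' a')| := Finset.abs_sum_le_sum_abs _ _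
            _ = D s' := Finset.sum_congr rfl fun a _ => by
                rw [abs_mul, abs_of_nonneg (hπ' s' a)]
  have hkey : ∀ s a, |Qπ' s a - Qπ s a| ≤ γ * ∑ s', T s a s' * (D s' + L * W1 s') := by
    intro s a
    have h2 : Qπ' s a - Qπ s a = γ * ∑ s', T s a s'
        * ((∑ a', π' s' a' * Qπ' s' a') - ∑ a', π s' a' * Qπ s' a') := by
      rw [hQπ' s a, hQπ s a]
      simp only [mul_sub, Finset.sum_sub_distrib]
      ring
    rw [h2, abs_mul, abs_of_pos hγ0]
    refine mul_le_mul_of_nonneg_left ?_ hγ0.le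
    calc |∑ s', T s a s' * ((∑ a', π' s' a' * Qπ' s' a') - ∑ a', π s' a' * Qπ s' a')|
        ≤ ∑ s', |T s a s' * ((∑ a', π' s' a' * Qπ' s' a') - ∑ a', π s' a' * Qπ s' a')| :=
          Finset.abs_sum_le_sum_abs _ _
      _ ≤ ∑ s', T s a s' * (D s' + L * W1 s') := by
          refine Finset.sum_le_sum fun s' _ => ?_
          rw [abs_mul, abs_of_nonneg (hT s a s')]
          exact mul_le_mul_of_nonneg_left (hdiff s') (hT s a s')
  -- expectation sequences
  set E : ℕ → ℝ := fun i => ∑ s, ρ i s * D s with hEdef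
  set F : ℕ → ℝ := fun i => ∑ s, ρ i s * W1 s with hFdef
  have hFnn : ∀ i, 0 ≤ F i := fun i =>
    Finset.sum_nonneg fun s _ => mul_nonneg (hρnn i s) (hW1nn s)
  have hEnn : ∀ i, 0 ≤ E i := fun i =>
    Finset.sum_nonneg fun s _ => mul_nonneg (hρnn i s) (hDnn s)
  -- the swap identity
  have hswap : ∀ (i : ℕ) (g : S → ℝ),
      ∑ s, ρ i s * ∑ a, π' s a * ∑ s', T s a s' * g s' = ∑ s', ρ (i+1) s' * g s' := by
    intro i g
    calc ∑ s, ρ i s * ∑ a, π' s a * ∑ s', T s a s' * g s'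
        = ∑ s, ∑ a, ∑ s', T s a s' * π' s a * ρ i s * g s' := by
          refine Finset.sum_congr rfl fun s _ => ?_
          rw [Finset.mul_sum]
          refine Finset.sum_congr rfl fun a _ => ?_
          rw [Finset.mul_sum, Finset.mul_sum]
          exact Finset.sum_congr rfl fun s' _ => by ring
      _ = ∑ s, ∑ s', ∑ a, T s a s' * π' s a * ρ i s * g s' :=
          Finset.sum_congr rfl fun s _ => Finset.sum_comm
      _ = ∑ s', ∑ s, ∑ a, T s a s' * π' s a * ρ i s * g s' := Finset.sum_comm
      _ = ∑ s', ρ (i+1) s' * g s' := by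
          refine Finset.sum_congr rfl fun s' _ => ?_
          rw [hρrec, Finset.sum_mul]
          refine Finset.sum_congr rfl fun s _ => ?_
          rw [Finset.sum_mul]
  -- one-step recursion for E
  have hErec : ∀ i, E i ≤ γ * (E (i+1) + L * F (i+1)) := by
    intro i
    have step1 : E i ≤ ∑ s, ρ i s * ∑ a, π' s a
        * (γ * ∑ s', T s a s' * (D s' + L * W1 s')) := by
      refine Finset.sum_le_sum fun s _ => ?_
      refine mul_le_mul_of_nonneg_left ?_ (hρnn i s)
      exact Finset.sum_le_sum fun a _ =>
        mul_le_mul_of_nonneg_left (hkey s a) (hπ' s a)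
    have step2 : ∑ s, ρ i s * ∑ a, π' s a * (γ * ∑ s', T s a s' * (D s' + L * W1 s'))
        = γ * ∑ s, ρ i s * ∑ a, π' s a * ∑ s', T s a s' * (D s' + L * W1 s') := by
      rw [Finset.mul_sum]
      refine Finset.sum_congr rfl fun s _ => ?_
      rw [Finset.mul_sum, Finset.mul_sum, Finset.mul_sum]
      exact Finset.sum_congr rfl fun a _ => by ring
    have step3 : ∑ s, ρ i s * ∑ a, π' s a * ∑ s', T s a s' * (D s' + L * W1 s')
        = E (i+1) + L * F (i+1) := by
      rw [hswap i (fun s' => D s' + L * W1 s')]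
      rw [hEdef, hFdef]
      simp only [Finset.mul_sum, ← Finset.sum_add_distrib]
      exact Finset.sum_congr rfl fun s' _ => by ring
    calc E i ≤ ∑ s, ρ i s * ∑ a, π' s a * (γ * ∑ s', T s a s' * (D s' + L * W1 s')) := step1
      _ = γ * ∑ s, ρ i s * ∑ a, π' s a * ∑ s', T s a s' * (D s' + L * W1 s') := step2
      _ = γ * (E (i+1) + L * F (i+1)) := by rw [step3]
  -- unrolled bound
  have hunroll : ∀ n, E 0 ≤ γ^n * E n + L * ∑ i ∈ Finset.range n, γ^(i+1) * F (i+1) := by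
    intro n
    induction n with
    | zero => simp
    | succ n ih =>
      calc E 0 ≤ γ^n * E n + L * ∑ i ∈ Finset.range n, γ^(i+1) * F (i+1) := ih
        _ ≤ γ^n * (γ * (E (n+1) + L * F (n+1)))
            + L * ∑ i ∈ Finset.range n, γ^(i+1) * F (i+1) := by
            refine add_le_add_left (mul_le_mul_of_nonneg_left (hErec n) (pow_nonneg hγ0.le n)) _
        _ = γ^(n+1) * E (n+1) + L * ∑ i ∈ Finset.range (n+1), γ^(i+1) * F (i+1) := by
            rw [Finset.sum_range_succ]
            ring
  -- uniform bounds
  set Dmax : ℝ := Finset.univ.sup' (Finset.univ_nonempty) D with hDmax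
  have hEbd : ∀ n, E n ≤ Dmax := by
    intro n
    calc E n ≤ ∑ s, ρ n s * Dmax := by
          refine Finset.sum_le_sum fun s _ => ?_
          exact mul_le_mul_of_nonneg_left (Finset.le_sup' D (Finset.mem_univ s)) (hρnn n s)
      _ = Dmax := by rw [← Finset.sum_mul, hρsum, one_mul]
  set Wmax : ℝ := Finset.univ.sup' (Finset.univ_nonempty) W1 with hWmax
  have hFbd : ∀ n, F n ≤ Wmax := by
    intro n
    calc F n ≤ ∑ s, ρ n s * Wmax := by
          refine Finset.sum_le_sum fun s _ => ?_
          exact mul_le_mul_of_nonneg_left (Finset.le_sup' W1 (Finset.mem_univ s)) (hρnn n s)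
      _ = Wmax := by rw [← Finset.sum_mul, hρsum, one_mul]
  -- summability
  have hsumgeom : Summable (fun i : ℕ => γ^i * Wmax) :=
    (summable_geometric_of_lt_one hγ0.le hγ1).mul_right Wmax
  have hsumF : Summable (fun i : ℕ => γ^i * F i) := by
    refine Summable.of_nonneg_of_le (fun i => mul_nonneg (pow_nonneg hγ0.le i) (hFnn i))
      (fun i => mul_le_mul_of_nonneg_left (hFbd i) (pow_nonneg hγ0.le i)) hsumgeom
  set C : ℝ := ∑' i : ℕ, γ^i * F i with hCdef
  -- limit argument
  have hfinal : E 0 ≤ L * C := by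
    have hbound : ∀ n, E 0 ≤ γ^n * Dmax + L * C := by
      intro n
      have h1 : ∑ i ∈ Finset.range n, γ^(i+1) * F (i+1) ≤ C := by
        have h2 : ∑ i ∈ Finset.range (n+1), γ^i * F i
            = (∑ i ∈ Finset.range n, γ^(i+1) * F (i+1)) + γ^0 * F 0 :=
          Finset.sum_range_succ' (fun i => γ^i * F i) n
        have h3 : ∑ i ∈ Finset.range (n+1), γ^i * F i ≤ C :=
          Summable.sum_le_tsum _ (fun i _ => mul_nonneg (pow_nonneg hγ0.le i) (hFnn i)) hsumF
        have h4 : 0 ≤ γ^0 * F 0 := mul_nonneg (pow_nonneg hγ0.le 0) (hFnn 0)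
        linarith
      calc E 0 ≤ γ^n * E n + L * ∑ i ∈ Finset.range n, γ^(i+1) * F (i+1) := hunroll n
        _ ≤ γ^n * Dmax + L * C := by
            refine add_le_add (mul_le_mul_of_nonneg_left (hEbd n) (pow_nonneg hγ0.le n))
              (mul_le_mul_of_nonneg_left h1 hL)
    have htend : Filter.Tendsto (fun n : ℕ => γ^n * Dmax + L * C) Filter.atTop
        (nhds (L * C)) := by
      have h0 : Filter.Tendsto (fun n : ℕ => γ^n * Dmax) Filter.atTop (nhds 0) := by
        have := (tendsto_pow_atTop_nhds_zero_of_lt_one hγ0.le hγ1).mul_const Dmax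
        simpa using this
      have := h0.add_const (L * C)
      simpa using this
    exact ge_of_tendsto' htend hbound
  -- identify LHS and RHS
  have hLHS : ∑ s, ρhat s * ∑ a, π' s a * |Qπ' s a - Qπ s a| = E 0 := by
    rw [hEdef]
    exact Finset.sum_congr rfl fun s _ => by rw [hρ0]
  have hsum_s : ∀ s : S, Summable (fun i : ℕ => γ^i * ρ i s * W1 s) := by
    intro s
    rcases le_or_gt (W1 s) 0 with hw | hw
    · have hw0 : W1 s = 0 := le_antisymm hw (hW1nn s)
      simp only [hw0, mul_zero]
      exact summable_zero
    · refine Summable.of_nonneg_of_le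
        (fun i => mul_nonneg (mul_nonneg (pow_nonneg hγ0.le i) (hρnn i s)) hw.le)
        (fun i => ?_) ((summable_geometric_of_lt_one hγ0.le hγ1).mul_right (W1 s))
      calc γ^i * ρ i s * W1 s ≤ γ^i * 1 * W1 s := by
            refine mul_le_mul_of_nonneg_right ?_ hw.le
            exact mul_le_mul_of_nonneg_left (hρle1 i s) (pow_nonneg hγ0.le i)
        _ = γ^i * W1 s := by ring
  have hRHS : (L / (1-γ)) * ∑ s, ((1-γ) * ∑' i : ℕ, γ^i * ρ i s) * W1 s = L * C := by
    have hne : (1:ℝ) - γ ≠ 0 := by linarith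
    have h1 : ∀ s : S, ((1-γ) * ∑' i : ℕ, γ^i * ρ i s) * W1 s
        = (1-γ) * ∑' i : ℕ, γ^i * ρ i s * W1 s := by
      intro s
      rw [mul_assoc, ← tsum_mul_right]
    have h2 : ∑ s, ((1-γ) * ∑' i : ℕ, γ^i * ρ i s) * W1 s
        = (1-γ) * ∑' i : ℕ, γ^i * F i := by
      simp only [h1]
      rw [← Finset.mul_sum]
      congr 1
      rw [← Summable.tsum_finsetSum (fun s _ => hsum_s s)]
      refine tsum_congr fun i => ?_
      rw [hFdef, Finset.mul_sum]
      exact Finset.sum_congr rfl fun s _ => by ring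
    rw [h2, hCdef]
    field_simp
  rw [hLHS, hRHS]
  exact hfinal
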